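/- For every r ≥ exp(a), L(r) ≤ L(exp(r)) ≤ (1+a)·L(r). -/

import Mathlib

open Real MeasureTheory Filter Topology Set

/-- `F(u) = a - log a + log u`. -/
noncomputable def Fa (a : ℝ) : ℝ → ℝ := fun u => a - Real.log a + Real.log u

/-- `F̃(u) = a · ∏_{k=0}^∞ (F^k(u)/a)`. -/
noncomputable def Ftilde (a : ℝ) (u : ℝ) : ℝ := a * ∏' k : ℕ, ((Fa a)^[k] u / a)

/-- `φ(u) = a + ∫_a^u dt / F̃(t)`. -/
noncomputable def phiFun (a : ℝ) (u : ℝ) : ℝ := a + ∫ t in a..u, 1 / Ftilde a t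

/-- The super-logarithm: `L(r) = φ(ar) - a` for `r ≥ 1` and `L(r) = -L(1/r)` for `0 < r < 1`. -/
noncomputable def superLog (a : ℝ) (r : ℝ) : ℝ :=
  if 1 ≤ r then phiFun a (a * r) - a else -(phiFun a (a * (1 / r)) - a)

namespace SLaux
variable {a : ℝ}

lemma ha0 (ha : 1 < a) : 0 < a := lt_trans one_pos ha

lemma Fa_ge (ha : 1 < a) {u : ℝ} (hu : a ≤ u) : a ≤ Fa a u := by
  have h := Real.log_le_log (ha0 ha) hu
  unfold Fa; linarith

lemma Fa_bound (ha : 1 < a) {u : ℝ} (hu : a ≤ u) : Fa a u ≤ a + (u - a) / a := by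
  have h0 : (0:ℝ) < a := ha0 ha
  have hu0 : (0:ℝ) < u := lt_of_lt_of_le h0 hu
  have h1 : Real.log u - Real.log a = Real.log (u / a) :=
    (Real.log_div (ne_of_gt hu0) (ne_of_gt h0)).symm
  have h2 : Real.log (u / a) ≤ u / a - 1 := Real.log_le_sub_one_of_pos (by positivity)
  have h3 : u / a - 1 = (u - a) / a := by field_simp
  unfold Fa; linarith

lemma iter_ge (ha : 1 < a) {u : ℝ} (hu : a ≤ u) : ∀ k, a ≤ (Fa a)^[k] u := by
  intro k; induction k with
  | zero => simpa using hu
  | succ k ih => rw [Function.iterate_succ_apply']; exact Fa_ge ha ih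

lemma iter_decay (ha : 1 < a) {u : ℝ} (hu : a ≤ u) :
    ∀ k, (Fa a)^[k] u ≤ a + (u - a) * (1 / a) ^ k := by
  intro k; induction k with
  | zero => simp
  | succ k ih =>
    rw [Function.iterate_succ_apply']
    have h0 : (0:ℝ) < a := ha0 ha
    have h1 := Fa_bound ha (iter_ge ha hu k)
    have h2 : ((Fa a)^[k] u - a) / a ≤ ((u - a) * (1 / a) ^ k) / a := by
      gcongr
      linarith
    have h3 : a + ((u - a) * (1 / a) ^ k) / a = a + (u - a) * (1 / a) ^ (k + 1) := by
      rw [pow_succ]; ring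
    linarith

lemma Fa_mono (ha : 1 < a) {u v : ℝ} (hu : a ≤ u) (huv : u ≤ v) : Fa a u ≤ Fa a v := by
  have h := Real.log_le_log (lt_of_lt_of_le (ha0 ha) hu) huv
  unfold Fa; linarith

lemma iter_mono (ha : 1 < a) {u v : ℝ} (hu : a ≤ u) (huv : u ≤ v) :
    ∀ k, (Fa a)^[k] u ≤ (Fa a)^[k] v := by
  intro k; induction k with
  | zero => simpa using huv
  | succ k ih =>
    rw [Function.iterate_succ_apply', Function.iterate_succ_apply']
    exact Fa_mono ha (iter_ge ha hu k) ih

lemma log_nonneg' (ha : 1 < a) {u : ℝ} (hu : a ≤ u) (k : ℕ) :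
    0 ≤ Real.log ((Fa a)^[k] u / a) := by
  apply Real.log_nonneg
  rw [le_div_iff₀ (ha0 ha)]
  simpa using iter_ge ha hu k

lemma log_le_geom (ha : 1 < a) {u : ℝ} (hu : a ≤ u) (k : ℕ) :
    Real.log ((Fa a)^[k] u / a) ≤ (u - a) * (1 / a) ^ k := by
  have h0 : (0:ℝ) < a := ha0 ha
  have hp : (0:ℝ) < (Fa a)^[k] u / a :=
    div_pos (lt_of_lt_of_le h0 (iter_ge ha hu k)) h0
  have h1 : Real.log ((Fa a)^[k] u / a) ≤ (Fa a)^[k] u / a - 1 :=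
    Real.log_le_sub_one_of_pos hp
  have h2 := iter_decay ha hu k
  have h3 : (Fa a)^[k] u / a - 1 ≤ ((u - a) * (1 / a) ^ k) / a := by
    rw [div_sub' (ne_of_gt h0), div_le_div_iff₀ h0 h0]
    nlinarith
  have h4 : ((u - a) * (1 / a) ^ k) / a ≤ (u - a) * (1 / a) ^ k := by
    apply div_le_self _ (le_of_lt ha)
    have : (0:ℝ) ≤ u - a := by linarith
    positivity
  linarith

lemma summable_geom (ha : 1 < a) (c : ℝ) : Summable (fun k : ℕ => c * (1 / a) ^ k) := by
  apply Summable.mul_left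
  apply summable_geometric_of_lt_one (by positivity)
  rw [div_lt_one (ha0 ha)]; exact ha

lemma summable_log (ha : 1 < a) {u : ℝ} (hu : a ≤ u) :
    Summable (fun k : ℕ => Real.log ((Fa a)^[k] u / a)) :=
  Summable.of_nonneg_of_le (log_nonneg' ha hu) (log_le_geom ha hu) (summable_geom ha (u - a))

lemma Ftilde_eq (ha : 1 < a) {u : ℝ} (hu : a ≤ u) :
    Ftilde a u = a * Real.exp (∑' k : ℕ, Real.log ((Fa a)^[k] u / a)) := by
  unfold Ftilde
  congr 1
  have h := (summable_log ha hu).hasSum.rexp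
  have he : (Real.exp ∘ fun k : ℕ => Real.log ((Fa a)^[k] u / a)) =
      fun k : ℕ => (Fa a)^[k] u / a := by
    funext k
    exact Real.exp_log (div_pos (lt_of_lt_of_le (ha0 ha) (iter_ge ha hu k)) (ha0 ha))
  rw [he] at h
  exact h.tprod_eq

lemma Ftilde_ge (ha : 1 < a) {u : ℝ} (hu : a ≤ u) : u ≤ Ftilde a u := by
  rw [Ftilde_eq ha hu]
  have h0 := ha0 ha
  have h1 : Real.log (u / a) ≤ ∑' k : ℕ, Real.log ((Fa a)^[k] u / a) := by
    have := Summable.le_tsum (summable_log ha hu) 0 (fun i _ => log_nonneg' ha hu i)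
    simpa using this
  have h2 : Real.exp (Real.log (u / a)) ≤ Real.exp (∑' k : ℕ, Real.log ((Fa a)^[k] u / a)) :=
    Real.exp_le_exp.mpr h1
  rw [Real.exp_log (div_pos (lt_of_lt_of_le h0 hu) h0)] at h2
  calc u = a * (u / a) := by field_simp
  _ ≤ a * Real.exp (∑' k : ℕ, Real.log ((Fa a)^[k] u / a)) := by
    exact mul_le_mul_of_nonneg_left h2 (le_of_lt h0)

lemma Ftilde_pos (ha : 1 < a) {u : ℝ} (hu : a ≤ u) : 0 < Ftilde a u :=
  lt_of_lt_of_le (lt_of_lt_of_le (ha0 ha) hu) (Ftilde_ge ha hu)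

lemma Ftilde_mono (ha : 1 < a) {u v : ℝ} (hu : a ≤ u) (huv : u ≤ v) :
    Ftilde a u ≤ Ftilde a v := by
  have hv : a ≤ v := le_trans hu huv
  rw [Ftilde_eq ha hu, Ftilde_eq ha hv]
  have h0 := ha0 ha
  apply mul_le_mul_of_nonneg_left _ (le_of_lt h0)
  apply Real.exp_le_exp.mpr
  apply Summable.tsum_le_tsum _ (summable_log ha hu) (summable_log ha hv)
  intro k
  apply Real.log_le_log (div_pos (lt_of_lt_of_le h0 (iter_ge ha hu k)) h0)
  exact div_le_div_of_nonneg_right (iter_mono ha hu huv k) h0.le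

lemma iter_contOn (ha : 1 < a) : ∀ k, ContinuousOn (fun u => (Fa a)^[k] u) (Ici a) := by
  intro k; induction k with
  | zero => exact continuousOn_id
  | succ k ih =>
    have : (fun u => (Fa a)^[k + 1] u) = fun u => Fa a ((Fa a)^[k] u) := by
      funext u; rw [Function.iterate_succ_apply']
    rw [this]
    have hlog : ContinuousOn (fun u => Real.log ((Fa a)^[k] u)) (Ici a) := by
      apply ContinuousOn.comp Real.continuousOn_log ih
      intro u hu
      simp only [mem_compl_iff, mem_singleton_iff]
      exact ne_of_gt (lt_of_lt_of_le (ha0 ha) (iter_ge ha hu k))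
    exact continuousOn_const.add hlog

lemma sum_contOn (ha : 1 < a) (M : ℝ) :
    ContinuousOn (fun u => ∑' k : ℕ, Real.log ((Fa a)^[k] u / a)) (Icc a M) := by
  have h0 := ha0 ha
  apply continuousOn_tsum (u := fun k : ℕ => (M - a) * (1 / a) ^ k)
  · intro k
    apply ContinuousOn.log
    · exact ((iter_contOn ha k).mono Icc_subset_Ici_self).div_const a
    · intro u hu
      exact ne_of_gt (div_pos (lt_of_lt_of_le h0 (iter_ge ha hu.1 k)) h0)
  · exact summable_geom ha (M - a)
  · intro k x hx
    rw [Real.norm_eq_abs, abs_of_nonneg (log_nonneg' ha hx.1 k)]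
    calc Real.log ((Fa a)^[k] x / a) ≤ (x - a) * (1 / a) ^ k := log_le_geom ha hx.1 k
    _ ≤ (M - a) * (1 / a) ^ k := by
      apply mul_le_mul_of_nonneg_right (by linarith [hx.2]) (by positivity)

lemma Ftilde_contOn (ha : 1 < a) (M : ℝ) : ContinuousOn (Ftilde a) (Icc a M) := by
  apply ContinuousOn.congr (f := fun u => a * Real.exp (∑' k : ℕ, Real.log ((Fa a)^[k] u / a)))
  · exact continuousOn_const.mul (Real.continuous_exp.comp_continuousOn (sum_contOn ha M))
  · intro u hu; exact Ftilde_eq ha hu.1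

lemma oneDiv_contOn (ha : 1 < a) (M : ℝ) :
    ContinuousOn (fun t => 1 / Ftilde a t) (Icc a M) :=
  continuousOn_const.div (Ftilde_contOn ha M) (fun t ht => ne_of_gt (Ftilde_pos ha ht.1))

lemma intInt (ha : 1 < a) {b c : ℝ} (hb : a ≤ b) (hc : a ≤ c) :
    IntervalIntegrable (fun t => 1 / Ftilde a t) volume b c := by
  apply ContinuousOn.intervalIntegrable
  apply (oneDiv_contOn ha (max b c)).mono
  intro t ht
  rw [Set.uIcc_eq_union] at ht
  constructor
  · rcases ht with h | h
    · exact le_trans hb h.1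
    · exact le_trans hc h.1
  · rcases ht with h | h
    · exact le_trans h.2 (le_max_right b c)
    · exact le_trans h.2 (le_max_left b c)

lemma Ftilde_shift (ha : 1 < a) {u : ℝ} (hu : a ≤ u) :
    Ftilde a (Fa a u) = Ftilde a u * a / u := by
  have h0 := ha0 ha
  have hu0 : (0:ℝ) < u := lt_of_lt_of_le h0 hu
  have hFu : a ≤ Fa a u := Fa_ge ha hu
  rw [Ftilde_eq ha hFu, Ftilde_eq ha hu]
  have hshift : ∀ k : ℕ, Real.log ((Fa a)^[k] (Fa a u) / a) =
      Real.log ((Fa a)^[k + 1] u / a) := by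
    intro k; rw [Function.iterate_succ_apply]
  rw [tsum_congr hshift]
  have hsum := summable_log ha hu
  have hz := Summable.tsum_eq_zero_add hsum
  have h1 : ∑' k : ℕ, Real.log ((Fa a)^[k + 1] u / a) =
      (∑' k : ℕ, Real.log ((Fa a)^[k] u / a)) - Real.log (u / a) := by
    simp only [Function.iterate_zero_apply] at hz
    linarith [hz]
  rw [h1, Real.exp_sub, Real.exp_log (div_pos hu0 h0)]
  field_simp

lemma Fa_E (ha : 1 < a) (u : ℝ) : Fa a (a * Real.exp (u - a)) = u := by
  have h0 := ha0 ha
  unfold Fa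
  rw [Real.log_mul (ne_of_gt h0) (ne_of_gt (Real.exp_pos _)), Real.log_exp]
  ring

lemma E_ge (ha : 1 < a) {u : ℝ} (hu : a ≤ u) : a ≤ a * Real.exp (u - a) :=
  le_mul_of_one_le_right (ha0 ha).le (Real.one_le_exp (by linarith))

lemma Ftilde_E (ha : 1 < a) {u : ℝ} (hu : a ≤ u) :
    Ftilde a (a * Real.exp (u - a)) = Ftilde a u * Real.exp (u - a) := by
  have h0 := ha0 ha
  have hE := Ftilde_shift ha (E_ge ha hu)
  rw [Fa_E ha u] at hE
  have he : (0:ℝ) < Real.exp (u - a) := Real.exp_pos _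
  field_simp at hE
  nlinarith [hE]

lemma int_subst (ha : 1 < a) {u : ℝ} (hu : a ≤ u) :
    ∫ t in a..(a * Real.exp (u - a)), 1 / Ftilde a t = a * ∫ t in a..u, 1 / Ftilde a t := by
  have h0 := ha0 ha
  have hE : ∀ s : ℝ, HasDerivAt (fun s => a * Real.exp (s - a)) (a * Real.exp (s - a)) s := by
    intro s
    have h := (((hasDerivAt_id s).sub_const a).exp).const_mul a
    simpa using h
  have himg : (fun s => a * Real.exp (s - a)) '' (Set.uIcc a u) ⊆
      Icc a (a * Real.exp (u - a)) := by
    rintro _ ⟨x, hx, rfl⟩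
    rw [Set.uIcc_of_le hu] at hx
    refine ⟨?_, ?_⟩
    · show a ≤ a * Real.exp (x - a)
      have h1 : (1:ℝ) ≤ Real.exp (x - a) := Real.one_le_exp (by linarith [hx.1])
      nlinarith
    · show a * Real.exp (x - a) ≤ a * Real.exp (u - a)
      have h2 : Real.exp (x - a) ≤ Real.exp (u - a) := Real.exp_le_exp.mpr (by linarith [hx.2])
      nlinarith
  have hg : ContinuousOn (fun t => 1 / Ftilde a t)
      ((fun s => a * Real.exp (s - a)) '' (Set.uIcc a u)) :=
    (oneDiv_contOn ha (a * Real.exp (u - a))).mono himg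
  have key := intervalIntegral.integral_comp_smul_deriv''
      (f := fun s => a * Real.exp (s - a)) (f' := fun s => a * Real.exp (s - a))
      (g := fun t => 1 / Ftilde a t) (a := a) (b := u)
      (fun x _ => (hE x).continuousAt.continuousWithinAt)
      (fun x _ => (hE x).hasDerivWithinAt)
      (fun x _ => (hE x).continuousAt.continuousWithinAt)
      hg
  simp only [Function.comp] at key
  have hfa : a * Real.exp (a - a) = a := by simp
  rw [hfa] at key
  rw [← key]
  rw [← intervalIntegral.integral_const_mul]
  apply intervalIntegral.integral_congr
  intro x hx
  rw [Set.uIcc_of_le hu] at hx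
  have hx1 : a ≤ x := hx.1
  have hFx := Ftilde_pos ha hx1
  have heq := Ftilde_E ha hx1
  have he : (0:ℝ) < Real.exp (x - a) := Real.exp_pos _
  simp only [Function.comp, smul_eq_mul]
  rw [heq]
  field_simp

lemma sl_eq {r : ℝ} (h1 : 1 ≤ r) :
    superLog a r = ∫ t in a..(a * r), 1 / Ftilde a t := by
  unfold superLog phiFun
  rw [if_pos h1]
  ring

lemma sl_funct (ha : 1 < a) {s : ℝ} (hs : 0 ≤ s) :
    superLog a (Real.exp s) = a * superLog a (1 + s / a) := by
  have h0 := ha0 ha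
  have hs1 : (1:ℝ) ≤ 1 + s / a := by
    have := div_nonneg hs h0.le; linarith
  rw [sl_eq (Real.one_le_exp hs), sl_eq hs1]
  have h1 : a * (1 + s / a) = a + s := by field_simp
  have h2 := int_subst ha (by linarith : a ≤ a + s)
  rw [h1]
  have h3 : a + s - a = s := by ring
  rw [h3] at h2
  exact h2

lemma sl_mono (ha : 1 < a) {r1 r2 : ℝ} (h1 : 1 ≤ r1) (h12 : r1 ≤ r2) :
    superLog a r1 ≤ superLog a r2 := by
  have h0 := ha0 ha
  rw [sl_eq h1, sl_eq (le_trans h1 h12)]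
  have ha1 : a ≤ a * r1 := le_mul_of_one_le_right h0.le h1
  have ha2 : a * r1 ≤ a * r2 := mul_le_mul_of_nonneg_left h12 h0.le
  have hadd := intervalIntegral.integral_add_adjacent_intervals
    (intInt ha (le_refl a) ha1) (intInt ha ha1 (le_trans ha1 ha2))
    (f := fun t => 1 / Ftilde a t) (μ := volume)
  have hpos : 0 ≤ ∫ t in (a * r1)..(a * r2), 1 / Ftilde a t := by
    apply intervalIntegral.integral_nonneg ha2
    intro t ht
    exact le_of_lt (one_div_pos.mpr (Ftilde_pos ha (le_trans ha1 ht.1)))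
  linarith [hadd]

lemma int_upper (ha : 1 < a) {b c : ℝ} (hb : a ≤ b) (hbc : b ≤ c) :
    ∫ t in b..c, 1 / Ftilde a t ≤ (c - b) * (1 / Ftilde a b) := by
  have h := intervalIntegral.integral_mono_on hbc (intInt ha hb (le_trans hb hbc))
    (intervalIntegrable_const (c := 1 / Ftilde a b))
    (fun x hx => by
      apply one_div_le_one_div_of_le (Ftilde_pos ha hb)
      exact Ftilde_mono ha hb hx.1)
  rw [intervalIntegral.integral_const] at h
  simpa [smul_eq_mul] using h

lemma int_lower (ha : 1 < a) {b c : ℝ} (hb : a ≤ b) (hbc : b ≤ c) :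
    (c - b) * (1 / Ftilde a c) ≤ ∫ t in b..c, 1 / Ftilde a t := by
  have hc : a ≤ c := le_trans hb hbc
  have h := intervalIntegral.integral_mono_on hbc
    (intervalIntegrable_const (c := 1 / Ftilde a c)) (intInt ha hb hc)
    (fun x hx => by
      apply one_div_le_one_div_of_le (Ftilde_pos ha (le_trans hb hx.1))
      exact Ftilde_mono ha (le_trans hb hx.1) hx.2)
  rw [intervalIntegral.integral_const] at h
  simpa [smul_eq_mul] using h

end SLaux

open SLaux in
/-- For every `r ≥ exp(a)`, `L(r) ≤ L(exp(r)) ≤ (1+a)·L(r)`. -/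
theorem stmt7 (a : ℝ) (ha : 1 < a) (r : ℝ) (hr : Real.exp a ≤ r) :
    superLog a r ≤ superLog a (Real.exp r) ∧
    superLog a (Real.exp r) ≤ (1 + a) * superLog a r := by

  have h0 : (0:ℝ) < a := ha0 ha
  have hr0 : (0:ℝ) < r := lt_of_lt_of_le (Real.exp_pos a) hr
  set x := Real.log r with hxdef
  have hx : a ≤ x := by
    have := Real.log_le_log (Real.exp_pos a) hr
    rwa [Real.log_exp] at this
  have hrx : Real.exp x = r := Real.exp_log hr0
  have hx0 : (0:ℝ) ≤ x := by linarith
  have hL1 : superLog a r = a * superLog a (1 + x / a) := by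
    rw [← hrx]; exact sl_funct ha hx0
  have hL2 : superLog a (Real.exp r) = a * superLog a (1 + r / a) := sl_funct ha (le_of_lt hr0)
  -- first inequality
  have hxr : x ≤ r := Real.log_le_self (le_of_lt hr0)
  have first : superLog a r ≤ superLog a (Real.exp r) := by
    rw [hL1, hL2]
    apply mul_le_mul_of_nonneg_left _ h0.le
    apply sl_mono ha (by nlinarith [div_nonneg hx0 h0.le])
    have : x / a ≤ r / a := div_le_div_of_nonneg_right hxr h0.le
    linarith
  refine ⟨first, ?_⟩
  -- second inequality
  have hra : a < r := lt_of_lt_of_le (by nlinarith [Real.add_one_le_exp a]) hr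
  have h2e : (2:ℝ) ≤ Real.exp 1 := by
    have := Real.add_one_le_exp 1; linarith
  have hstep1 : 1 + r / a ≤ Real.exp (x + 1) := by
    rw [Real.exp_add, hrx]
    have h1 : (1:ℝ) ≤ r / a := (one_le_div h0).mpr hra.le
    have h2 : r / a ≤ r := by
      rw [div_le_iff₀ h0]; nlinarith
    calc 1 + r / a ≤ r / a + r / a := by linarith
    _ = 2 * (r / a) := by ring
    _ ≤ Real.exp 1 * r := by nlinarith
    _ = r * Real.exp 1 := by ring
  have hL3 : superLog a (Real.exp (x + 1)) = a * superLog a (1 + (x + 1) / a) :=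
    sl_funct ha (by linarith)
  have hmono2 : superLog a (1 + r / a) ≤ superLog a (Real.exp (x + 1)) := by
    apply sl_mono ha (by nlinarith [div_nonneg hr0.le h0.le]) hstep1
  -- core integral estimate : a * A ≤ (1 + a) * B
  have hAeq : superLog a (1 + (x + 1) / a) = ∫ t in a..(a + x + 1), 1 / Ftilde a t := by
    rw [sl_eq (by nlinarith [div_nonneg (by linarith : (0:ℝ) ≤ x + 1) h0.le])]
    congr 1
    field_simp; ring
  have hBeq : superLog a (1 + x / a) = ∫ t in a..(a + x), 1 / Ftilde a t := by
    rw [sl_eq (by nlinarith [div_nonneg hx0 h0.le])]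
    congr 1
    field_simp
  set A := ∫ t in a..(a + x + 1), 1 / Ftilde a t with hA
  set B := ∫ t in a..(a + x), 1 / Ftilde a t with hB
  have hFpos : 0 < Ftilde a (a + x) := Ftilde_pos ha (by linarith)
  have hsplit : B + (∫ t in (a + x)..(a + x + 1), 1 / Ftilde a t) = A :=
    intervalIntegral.integral_add_adjacent_intervals
      (intInt ha (le_refl a) (by linarith)) (intInt ha (by linarith) (by linarith))
  have hup : (∫ t in (a + x)..(a + x + 1), 1 / Ftilde a t) ≤ 1 / Ftilde a (a + x) := by
    have h := int_upper ha (b := a + x) (c := a + x + 1) (by linarith) (by linarith)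
    have he : a + x + 1 - (a + x) = 1 := by ring
    rw [he, one_mul] at h
    exact h
  have hlow : x * (1 / Ftilde a (a + x)) ≤ B := by
    have h := int_lower ha (b := a) (c := a + x) (le_refl a) (by linarith)
    have he : a + x - a = x := by ring
    rw [he] at h
    exact h
  have hcore : a * A ≤ (1 + a) * B := by
    have h1 : a * (A - B) ≤ a * (1 / Ftilde a (a + x)) := by
      apply mul_le_mul_of_nonneg_left _ h0.le
      linarith
    have h2 : a * (1 / Ftilde a (a + x)) ≤ x * (1 / Ftilde a (a + x)) := by
      apply mul_le_mul_of_nonneg_right hx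
      positivity
    nlinarith
  -- assemble
  rw [hL2, hL1]
  have hchain : superLog a (1 + r / a) ≤ a * superLog a (1 + (x + 1) / a) := by
    rw [← hL3]; exact hmono2
  rw [hAeq] at hchain
  have k2 : a * superLog a (1 + r / a) ≤ a * (a * A) := mul_le_mul_of_nonneg_left hchain h0.le
  have k3 : a * (a * A) ≤ a * ((1 + a) * B) := mul_le_mul_of_nonneg_left hcore h0.le
  rw [hBeq]
  nlinarith [k2, k3]
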